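/- Equivalence of (PEI) and (PNFI): Under the sequential model with 𝒳 = {1,…,X}, X = min{n : V_n = 1} for independent Bernoulli variables (V_n)_{0≤n≤M} with P(V_n = 1) = q_n/Q_n, and objective σ-field generated by U and the V_n, a probability P_A satisfying (PN) satisfies (PEI) if and only if it satisfies (PNFI): P_A(G | S = n) = P(G) whenever 0 ≤ n ≤ M and G ∈ σ(V_n, …, V_M, U). -/
import Mathlib


open scoped Classical
open Finset

/-- Probability of a set under a weight function on a finite type. -/
noncomputable def pr {α : Type*} [Fintype α] (μ : α → ℝ) (A : Set α) : ℝ :=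
  ∑ a : α, if a ∈ A then μ a else 0

/-- Conditional probability. -/
noncomputable def cpr {α : Type*} [Fintype α] (μ : α → ℝ) (A B : Set α) : ℝ :=
  pr μ (A ∩ B) / pr μ B

/-- Expectation. -/
noncomputable def ex {α : Type*} [Fintype α] (μ : α → ℝ) (f : α → ℝ) : ℝ :=
  ∑ a : α, μ a * f a

/-- A probability weight: nonnegative and summing to one. -/
-- auxiliary lemmas
lemma SSB.pr_nonneg {α : Type*} [Fintype α] {μ : α → ℝ} (h : ∀ a, 0 ≤ μ a) (A : Set α) :
    0 ≤ pr μ A := by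
  refine Finset.sum_nonneg fun a _ => ?_
  split
  · exact h a
  · exact le_refl 0

lemma SSB.pr_mono {α : Type*} [Fintype α] {μ : α → ℝ} (h : ∀ a, 0 ≤ μ a) {A B : Set α}
    (hAB : A ⊆ B) : pr μ A ≤ pr μ B := by
  refine Finset.sum_le_sum fun a _ => ?_
  by_cases hA : a ∈ A
  · simp [hA, hAB hA]
  · simp only [hA, if_false]
    split
    · exact h a
    · exact le_refl 0

lemma SSB.pr_union_le {α : Type*} [Fintype α] {μ : α → ℝ} (h : ∀ a, 0 ≤ μ a) (A B : Set α) :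
    pr μ (A ∪ B) ≤ pr μ A + pr μ B := by
  rw [pr, pr, pr, ← Finset.sum_add_distrib]
  refine Finset.sum_le_sum fun a _ => ?_
  by_cases hA : a ∈ A <;> by_cases hB : a ∈ B <;>
    simp [hA, hB, h a, Set.mem_union]

lemma SSB.pr_congr {α : Type*} [Fintype α] {μ : α → ℝ} {A B : Set α}
    (h : ∀ a, μ a ≠ 0 → (a ∈ A ↔ a ∈ B)) : pr μ A = pr μ B := by
  refine Finset.sum_congr rfl fun a _ => ?_
  by_cases hz : μ a = 0
  · split <;> split <;> simp [hz]
  · rw [if_congr (h a hz) rfl rfl]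

lemma SSB.pr_congr_null {α : Type*} [Fintype α] {μ : α → ℝ} (h : ∀ a, 0 ≤ μ a)
    {A B D : Set α} (hD : pr μ D = 0)
    (hAB : ∀ a, a ∉ D → (a ∈ A ↔ a ∈ B)) : pr μ A = pr μ B := by
  have key : ∀ {C C' : Set α}, (∀ a, a ∉ D → (a ∈ C → a ∈ C')) → pr μ C ≤ pr μ C' := by
    intro C C' hCC'
    have hsub : C ⊆ C' ∪ D := fun a ha => by
      by_cases hd : a ∈ D
      · exact Or.inr hd
      · exact Or.inl (hCC' a hd ha)
    calc pr μ C ≤ pr μ (C' ∪ D) := SSB.pr_mono h hsub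
      _ ≤ pr μ C' + pr μ D := SSB.pr_union_le h _ _
      _ = pr μ C' := by rw [hD, add_zero]
  exact le_antisymm (key fun a ha => (hAB a ha).mp) (key fun a ha => (hAB a ha).mpr)

lemma SSB.pr_compl {α : Type*} [Fintype α] (μ : α → ℝ) (A : Set α) :
    pr μ Aᶜ = (∑ a, μ a) - pr μ A := by
  rw [pr, pr, eq_sub_iff_add_eq, ← Finset.sum_add_distrib]
  refine Finset.sum_congr rfl fun a _ => ?_
  by_cases hA : a ∈ A <;> simp [hA]

lemma SSB.sum_prod_bool {I : Type*} [Fintype I] [DecidableEq I] (φ : I → Bool → ℝ) :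
    ∑ x : I → Bool, ∏ i, φ i (x i) = ∏ i, (φ i true + φ i false) := by
  have : ∀ i : I, φ i true + φ i false = ∑ b : Bool, φ i b := by
    intro i; rw [Fintype.sum_bool]
  simp_rw [this]
  rw [Finset.prod_univ_sum]
  refine Finset.sum_congr ?_ fun _ _ => rfl
  ext x; simp

lemma SSB.sum_prod_bool_one {I : Type*} [Fintype I] [DecidableEq I] (φ : I → Bool → ℝ)
    (h : ∀ i, φ i true + φ i false = 1) :
    ∑ x : I → Bool, ∏ i, φ i (x i) = 1 := by
  rw [SSB.sum_prod_bool]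
  exact Finset.prod_eq_one fun i _ => h i

lemma SSB.split_sum (M : ℕ) (n : Fin (M + 1)) (p : Fin (M + 1) → ℝ)
    (f g : (Fin (M + 1) → Bool) → ℝ)
    (hf : ∀ v v', (∀ k : Fin (M + 1), n.val ≤ k.val → v k = v' k) → f v = f v')
    (hg : ∀ v v', (∀ k : Fin (M + 1), k.val < n.val → v k = v' k) → g v = g v') :
    ∑ v : Fin (M + 1) → Bool, (∏ k, if v k then p k else 1 - p k) * (f v * g v)
      = (∑ v : Fin (M + 1) → Bool, (∏ k, if v k then p k else 1 - p k) * f v)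
        * (∑ v : Fin (M + 1) → Bool, (∏ k, if v k then p k else 1 - p k) * g v) := by
  set φ : Fin (M + 1) → Bool → ℝ := fun k b => if b then p k else 1 - p k with hφ
  set q : Fin (M + 1) → Prop := fun k => k.val < n.val with hq
  set m : (∀ k : {k : Fin (M+1) // q k}, Bool) → (∀ k : {k : Fin (M+1) // ¬ q k}, Bool) →
      (Fin (M + 1) → Bool) :=
    fun x y k => if h : q k then x ⟨k, h⟩ else y ⟨k, h⟩ with hm
  have hsum : ∀ F : (Fin (M + 1) → Bool) → ℝ,
      ∑ v, F v = ∑ x, ∑ y, F (m x y) := by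
    intro F
    rw [← Equiv.sum_comp (Equiv.piEquivPiSubtypeProd q (fun _ => Bool)).symm F,
      Fintype.sum_prod_type]
    refine Finset.sum_congr rfl fun x _ => Finset.sum_congr rfl fun y _ => ?_
    congr 1
  have hW : ∀ x y, (∏ k, φ k (m x y k))
      = (∏ k : {k : Fin (M+1) // q k}, φ k.1 (x k)) * (∏ k : {k : Fin (M+1) // ¬ q k}, φ k.1 (y k)) := by
    intro x y
    rw [← Fintype.prod_subtype_mul_prod_subtype q (fun k => φ k (m x y k))]
    congr 1
    · exact Fintype.prod_congr _ _ fun k => by simp [hm, k.2]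
    · exact Fintype.prod_congr _ _ fun k => by simp [hm, k.2]
  have hfm : ∀ x y, f (m x y) = f (m (fun _ => false) y) := by
    intro x y
    refine hf _ _ fun k hk => ?_
    have : ¬ q k := by simp [hq]; omega
    simp [hm, this]
  have hgm : ∀ x y, g (m x y) = g (m x (fun _ => false)) := by
    intro x y
    refine hg _ _ fun k hk => ?_
    have : q k := hk
    simp [hm, this]
  have hWlo : (∑ x : ∀ k : {k : Fin (M+1) // q k}, Bool, ∏ k, φ k.1 (x k)) = 1 := by
    refine SSB.sum_prod_bool_one (fun k : {k : Fin (M+1) // q k} => φ k.1) fun k => ?_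
    norm_num [hφ]
  have hWhi : (∑ y : ∀ k : {k : Fin (M+1) // ¬ q k}, Bool, ∏ k, φ k.1 (y k)) = 1 := by
    refine SSB.sum_prod_bool_one (fun k : {k : Fin (M+1) // ¬ q k} => φ k.1) fun k => ?_
    norm_num [hφ]
  have e1 : ∑ v : Fin (M + 1) → Bool, (∏ k, φ k (v k)) * (f v * g v)
      = (∑ x, (∏ k, φ k.1 (x k)) * g (m x (fun _ => false)))
        * (∑ y, (∏ k, φ k.1 (y k)) * f (m (fun _ => false) y)) := by
    rw [hsum, Finset.sum_mul_sum]
    refine Finset.sum_congr rfl fun x _ => Finset.sum_congr rfl fun y _ => ?_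
    rw [hW, hfm, hgm]; ring
  have e2 : ∑ v : Fin (M + 1) → Bool, (∏ k, φ k (v k)) * f v
      = (∑ y, (∏ k, φ k.1 (y k)) * f (m (fun _ => false) y)) := by
    rw [hsum]
    have key : ∀ x, ∑ y, (∏ k, φ k ((m x y) k)) * f (m x y)
        = (∏ k : {k : Fin (M+1) // q k}, φ k.1 (x k))
          * ∑ y, (∏ k : {k : Fin (M+1) // ¬ q k}, φ k.1 (y k)) * f (m (fun _ => false) y) := by
      intro x
      rw [Finset.mul_sum]
      refine Finset.sum_congr rfl fun y _ => ?_
      rw [hW, hfm]; ring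
    simp_rw [key]
    rw [← Finset.sum_mul, hWlo, one_mul]
  have e3 : ∑ v : Fin (M + 1) → Bool, (∏ k, φ k (v k)) * g v
      = (∑ x, (∏ k, φ k.1 (x k)) * g (m x (fun _ => false))) := by
    rw [hsum]
    have key : ∀ x, ∑ y, (∏ k, φ k ((m x y) k)) * g (m x y)
        = ((∏ k : {k : Fin (M+1) // q k}, φ k.1 (x k)) * g (m x (fun _ => false)))
          * ∑ y : ∀ k : {k : Fin (M+1) // ¬ q k}, Bool, (∏ k, φ k.1 (y k)) := by
      intro x
      rw [Finset.mul_sum]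
      refine Finset.sum_congr rfl fun y _ => ?_
      rw [hW, hgm]; ring
    simp_rw [key]
    rw [← Finset.sum_mul, hWhi]
    simp
  calc ∑ v : Fin (M + 1) → Bool, (∏ k, φ k (v k)) * (f v * g v)
      = _ := e1
    _ = (∑ v : Fin (M + 1) → Bool, (∏ k, φ k (v k)) * f v)
        * (∑ v : Fin (M + 1) → Bool, (∏ k, φ k (v k)) * g v) := by
        rw [e2, e3]; ring

noncomputable def SSB.ind (P : Prop) : ℝ := if P then 1 else 0

lemma SSB.ind_congr {P Q : Prop} (h : P ↔ Q) : SSB.ind P = SSB.ind Q := by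
  unfold SSB.ind
  by_cases hP : P
  · rw [if_pos hP, if_pos (h.mp hP)]
  · rw [if_neg hP, if_neg (fun hq => hP (h.mpr hq))]

lemma SSB.ind_and (P Q : Prop) : SSB.ind (P ∧ Q) = SSB.ind P * SSB.ind Q := by
  unfold SSB.ind
  by_cases hP : P <;> by_cases hQ : Q <;> simp [hP, hQ]

lemma SSB.factor {γ : Type*} [Fintype γ] {M : ℕ} (n : Fin (M + 1))
    (μ : γ → ℝ) (hμ1 : ∑ u, μ u = 1) (p : Fin (M + 1) → ℝ)
    (P0 : γ × (Fin (M + 1) → Bool) → ℝ)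
    (hP0 : ∀ u v, P0 (u, v) = μ u * ∏ k, (if v k then p k else 1 - p k))
    (G : Set (γ × (Fin (M + 1) → Bool)))
    (hG : ∀ (u : γ) (v v' : Fin (M + 1) → Bool),
      (∀ k : Fin (M + 1), n.val ≤ k.val → v k = v' k) → ((u, v) ∈ G ↔ (u, v') ∈ G))
    (L : Set (Fin (M + 1) → Bool))
    (hL : ∀ v v', (∀ k : Fin (M + 1), k.val < n.val → v k = v' k) → (v ∈ L ↔ v' ∈ L)) :
    pr P0 (G ∩ {o | o.2 ∈ L}) = pr P0 G * pr P0 {o | o.2 ∈ L} := by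
  have key : ∀ A : Set (γ × (Fin (M + 1) → Bool)),
      pr P0 A = ∑ u, μ u * ∑ v, (∏ k, if v k then p k else 1 - p k)
        * SSB.ind ((u, v) ∈ A) := by
    intro A
    rw [pr, Fintype.sum_prod_type]
    refine Finset.sum_congr rfl fun u _ => ?_
    rw [Finset.mul_sum]
    refine Finset.sum_congr rfl fun v _ => ?_
    rw [hP0]
    by_cases h : (u, v) ∈ A <;> simp [SSB.ind, h]
  rw [key, key, key]
  set c : ℝ := ∑ v : Fin (M + 1) → Bool,
    (∏ k, if v k then p k else 1 - p k) * SSB.ind (v ∈ L) with hc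
  have hmemL : ∀ (u : γ) (v : Fin (M + 1) → Bool),
      SSB.ind ((u, v) ∈ {o : γ × (Fin (M + 1) → Bool) | o.2 ∈ L}) = SSB.ind (v ∈ L) :=
    fun u v => SSB.ind_congr (by simp [Set.mem_setOf_eq])
  have hmemGL : ∀ (u : γ) (v : Fin (M + 1) → Bool),
      SSB.ind ((u, v) ∈ G ∩ {o : γ × (Fin (M + 1) → Bool) | o.2 ∈ L})
      = SSB.ind ((u, v) ∈ G) * SSB.ind (v ∈ L) := by
    intro u v
    rw [SSB.ind_congr (Set.mem_inter_iff _ _ _), SSB.ind_and]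
    rw [hmemL]
  simp_rw [hmemGL, hmemL]
  have hsplit : ∀ u : γ,
      (∑ v : Fin (M + 1) → Bool, (∏ k, if v k then p k else 1 - p k)
        * (SSB.ind ((u, v) ∈ G) * SSB.ind (v ∈ L)))
      = (∑ v : Fin (M + 1) → Bool, (∏ k, if v k then p k else 1 - p k)
        * SSB.ind ((u, v) ∈ G)) * c := by
    intro u
    have hf : ∀ v v', (∀ k : Fin (M + 1), n.val ≤ k.val → v k = v' k) →
        SSB.ind ((u, v) ∈ G) = SSB.ind ((u, v') ∈ G) :=
      fun v v' h => SSB.ind_congr (hG u v v' h)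
    have hg : ∀ v v', (∀ k : Fin (M + 1), k.val < n.val → v k = v' k) →
        SSB.ind (v ∈ L) = SSB.ind (v' ∈ L) :=
      fun v v' h => SSB.ind_congr (hL v v' h)
    rw [SSB.split_sum M n p (fun v => SSB.ind ((u, v) ∈ G))
      (fun v => SSB.ind (v ∈ L)) hf hg, ← hc]
  simp_rw [hsplit]
  rw [← hc, ← Finset.sum_mul, hμ1, one_mul, Finset.sum_mul]
  refine Finset.sum_congr rfl fun u _ => ?_
  ring

def IsProb {α : Type*} [Fintype α] (μ : α → ℝ) : Prop :=
  (∀ a, 0 ≤ μ a) ∧ ∑ a : α, μ a = 1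

/-- Equivalence of (PEI) and (PNFI) for the sequential model. The objective
space is the canonical product `γ × (Fin (M+1) → Bool)` carrying the auxiliary
randomisation `U` (first coordinate) and the independent Bernoulli variables
`V_0, …, V_M` (second coordinate), with `P(V_k = 1) = p k` and `p M = 1`
(corresponding to `p n = q_n/Q_n`). The day of first success is
`X = min{n : V_n = 1}` and `𝒳 = {k : 1 ≤ k ≤ X}`. A probability `PA`
satisfying (PN) satisfies (PEI) iff it satisfies (PNFI): for every `n` and
every event `G` measurable with respect to `σ(V_n, …, V_M, U)`,
`P_A(G | S = n) = P(G)`. -/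
theorem stmt15 (M : ℕ) {γ : Type*} [Fintype γ]
    (μ : γ → ℝ) (hμ : IsProb μ)
    (p : Fin (M + 1) → ℝ) (hp : ∀ k, 0 ≤ p k ∧ p k ≤ 1) (hpM : p (Fin.last M) = 1)
    (P0 : γ × (Fin (M + 1) → Bool) → ℝ)
    (hP0 : ∀ (u : γ) (v : Fin (M + 1) → Bool),
      P0 (u, v) = μ u * ∏ k, (if v k then p k else 1 - p k))
    (X : (Fin (M + 1) → Bool) → ℕ)
    (hX : ∀ (v : Fin (M + 1) → Bool) (n : Fin (M + 1)),
      v n = true → (∀ m : Fin (M + 1), m < n → v m = false) → X v = n.val)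
    (𝒳 : γ × (Fin (M + 1) → Bool) → Finset (Fin (M + 1)))
    (h𝒳 : ∀ o, 𝒳 o = Finset.univ.filter (fun k : Fin (M + 1) => 1 ≤ k.val ∧ k.val ≤ X o.2))
    (PA : (γ × (Fin (M + 1) → Bool)) × Option (Fin (M + 1)) → ℝ) (hPA : IsProb PA)
    -- (PN)
    (hPN1 : ∀ F : Set (γ × (Fin (M + 1) → Bool)),
      pr P0 F = 0 → pr PA {ω | ω.1 ∈ F} = 0)
    (hPN2 : pr PA {ω | ∃ x : Fin (M + 1), ω.2 = some x ∧ x ∈ 𝒳 ω.1} = 1) :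
    -- (PEI) ↔ (PNFI)
    ((∀ (F : Set (γ × (Fin (M + 1) → Bool))) (n : Fin (M + 1)),
        0 < pr PA {ω | ω.2 = some n} →
        cpr PA {ω | ω.1 ∈ F} {ω | ω.2 = some n} = cpr P0 F {o | n.val ≤ X o.2})
      ↔
      (∀ (n : Fin (M + 1)) (G : Set (γ × (Fin (M + 1) → Bool))),
        -- G is measurable with respect to σ(V_n, …, V_M, U)
        (∀ (u : γ) (v v' : Fin (M + 1) → Bool),
          (∀ k : Fin (M + 1), n ≤ k → v k = v' k) → ((u, v) ∈ G ↔ (u, v') ∈ G)) →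
        0 < pr PA {ω | ω.2 = some n} →
        cpr PA {ω | ω.1 ∈ G} {ω | ω.2 = some n} = pr P0 G)) := by
  obtain ⟨hμ0, hμ1⟩ := hμ
  obtain ⟨hPA0, hPA1⟩ := hPA
  have hPNz : ∀ o : γ × (Fin (M + 1) → Bool), o.2 (Fin.last M) = false → P0 o = 0 := by
    intro o ho
    rw [show P0 o = P0 (o.1, o.2) from rfl, hP0]
    have hz : (∏ k, if o.2 k then p k else 1 - p k) = 0 :=
      Finset.prod_eq_zero (Finset.mem_univ (Fin.last M)) (by rw [ho, hpM]; norm_num)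
    rw [hz, mul_zero]
  have hNnull : pr P0 {o : γ × (Fin (M + 1) → Bool) | o.2 (Fin.last M) = false} = 0 := by
    rw [pr]
    refine Finset.sum_eq_zero fun o _ => ?_
    by_cases h : o ∈ {o : γ × (Fin (M + 1) → Bool) | o.2 (Fin.last M) = false}
    · rw [if_pos h]; exact hPNz o h
    · rw [if_neg h]
  have hlastT : ∀ o : γ × (Fin (M + 1) → Bool), P0 o ≠ 0 → o.2 (Fin.last M) = true := by
    intro o hne
    rcases Bool.eq_false_or_eq_true (o.2 (Fin.last M)) with h | h
    · exact h
    · exact absurd (hPNz o h) hne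
  have hXiff : ∀ v : Fin (M + 1) → Bool, v (Fin.last M) = true → ∀ n : Fin (M + 1),
      ((n : ℕ) ≤ X v ↔ ∀ k : Fin (M + 1), (k : ℕ) < (n : ℕ) → v k = false) := by
    intro v hv n
    set T := Finset.univ.filter (fun k : Fin (M + 1) => v k = true) with hT
    have hTne : T.Nonempty := ⟨Fin.last M, by simp [hT, hv]⟩
    set j := T.min' hTne with hj
    have hjT : j ∈ T := T.min'_mem hTne
    have hjtrue : v j = true := (Finset.mem_filter.mp hjT).2
    have hjmin : ∀ m : Fin (M + 1), m < j → v m = false := by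
      intro m hm
      by_contra hmc
      have hmt : v m = true := by revert hmc; cases (v m) <;> simp
      have hmT : m ∈ T := Finset.mem_filter.mpr ⟨Finset.mem_univ m, hmt⟩
      exact absurd (T.min'_le m hmT) (not_le.mpr hm)
    have hXv : X v = (j : ℕ) := hX v j hjtrue hjmin
    constructor
    · intro h k hk
      refine hjmin k ?_
      have : (k : ℕ) < (j : ℕ) := lt_of_lt_of_le hk (hXv ▸ h)
      exact this
    · intro h
      rw [hXv]
      by_contra hc
      push_neg at hc
      have : v j = false := h j hc
      rw [this] at hjtrue
      exact Bool.false_ne_true hjtrue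
  have hXL : ∀ n : Fin (M + 1),
      pr P0 {o : γ × (Fin (M + 1) → Bool) | (n : ℕ) ≤ X o.2}
      = pr P0 {o : γ × (Fin (M + 1) → Bool) |
          ∀ k : Fin (M + 1), (k : ℕ) < (n : ℕ) → o.2 k = false} := by
    intro n
    refine SSB.pr_congr fun o hne => ?_
    exact hXiff o.2 (hlastT o hne) n
  have hB2 : pr PA {ω : (γ × (Fin (M + 1) → Bool)) × Option (Fin (M + 1)) |
      ∃ x : Fin (M + 1), ω.2 = some x ∧ x ∈ 𝒳 ω.1}ᶜ = 0 := by
    rw [SSB.pr_compl, hPA1, hPN2]; ring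
  have hEX : ∀ (n : Fin (M + 1)) (ω : (γ × (Fin (M + 1) → Bool)) × Option (Fin (M + 1))),
      ω.2 = some n →
      ω ∉ {ω : (γ × (Fin (M + 1) → Bool)) × Option (Fin (M + 1)) |
        ∃ x : Fin (M + 1), ω.2 = some x ∧ x ∈ 𝒳 ω.1}ᶜ →
      (n : ℕ) ≤ X ω.1.2 := by
    intro n ω h1 h2
    simp only [Set.mem_compl_iff, Set.mem_setOf_eq, not_not] at h2
    obtain ⟨x, hx1, hx2⟩ := h2
    rw [h1] at hx1
    have hxn : n = x := Option.some_inj.mp hx1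
    rw [h𝒳] at hx2
    have := (Finset.mem_filter.mp hx2).2.2
    rw [← hxn] at this
    exact this
  have hLowpos : ∀ n : Fin (M + 1), 0 < pr PA {ω : (γ × (Fin (M + 1) → Bool)) × Option (Fin (M + 1)) | ω.2 = some n} →
      pr P0 {o : γ × (Fin (M + 1) → Bool) |
        ∀ k : Fin (M + 1), (k : ℕ) < (n : ℕ) → o.2 k = false} ≠ 0 := by
    intro n hpos h0
    have hXz : pr P0 {o : γ × (Fin (M + 1) → Bool) | (n : ℕ) ≤ X o.2} = 0 := by
      rw [hXL n]; exact h0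
    have hAz : pr PA {ω : (γ × (Fin (M + 1) → Bool)) × Option (Fin (M + 1)) |
        ω.1 ∈ {o : γ × (Fin (M + 1) → Bool) | (n : ℕ) ≤ X o.2}} = 0 := hPN1 _ hXz
    have hsub : {ω : (γ × (Fin (M + 1) → Bool)) × Option (Fin (M + 1)) | ω.2 = some n}
        ⊆ {ω : (γ × (Fin (M + 1) → Bool)) × Option (Fin (M + 1)) |
            ω.1 ∈ {o : γ × (Fin (M + 1) → Bool) | (n : ℕ) ≤ X o.2}}
          ∪ {ω : (γ × (Fin (M + 1) → Bool)) × Option (Fin (M + 1)) |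
            ∃ x : Fin (M + 1), ω.2 = some x ∧ x ∈ 𝒳 ω.1}ᶜ := by
      intro ω hω
      by_cases hb : ω ∈ {ω : (γ × (Fin (M + 1) → Bool)) × Option (Fin (M + 1)) |
          ∃ x : Fin (M + 1), ω.2 = some x ∧ x ∈ 𝒳 ω.1}ᶜ
      · exact Or.inr hb
      · exact Or.inl (hEX n ω hω hb)
    have hle := (SSB.pr_mono hPA0 hsub).trans (SSB.pr_union_le hPA0 _ _)
    rw [hAz, hB2] at hle
    linarith
  have hfact : ∀ (n : Fin (M + 1)) (G : Set (γ × (Fin (M + 1) → Bool))),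
      (∀ (u : γ) (v v' : Fin (M + 1) → Bool),
        (∀ k : Fin (M + 1), n ≤ k → v k = v' k) → ((u, v) ∈ G ↔ (u, v') ∈ G)) →
      pr P0 (G ∩ {o : γ × (Fin (M + 1) → Bool) |
          ∀ k : Fin (M + 1), (k : ℕ) < (n : ℕ) → o.2 k = false})
        = pr P0 G * pr P0 {o : γ × (Fin (M + 1) → Bool) |
          ∀ k : Fin (M + 1), (k : ℕ) < (n : ℕ) → o.2 k = false} := by
    intro n G hG
    have := SSB.factor n μ hμ1 p P0 hP0 G
      (fun u v v' h => hG u v v' (fun k hk => h k hk))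
      {v : Fin (M + 1) → Bool | ∀ k : Fin (M + 1), (k : ℕ) < (n : ℕ) → v k = false}
      (by
        intro v v' h
        constructor <;> intro hm k hk
        · rw [← h k hk]; exact hm k hk
        · rw [h k hk]; exact hm k hk)
    exact this
  constructor
  · -- (PEI) → (PNFI)
    intro hPEI n G hGmeas hpos
    rw [hPEI G n hpos]
    have h1 : pr P0 (G ∩ {o : γ × (Fin (M + 1) → Bool) | (n : ℕ) ≤ X o.2})
        = pr P0 (G ∩ {o : γ × (Fin (M + 1) → Bool) |
            ∀ k : Fin (M + 1), (k : ℕ) < (n : ℕ) → o.2 k = false}) := by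
      refine SSB.pr_congr fun o hne => ?_
      have hv := hlastT o hne
      constructor
      · rintro ⟨hg, hx⟩; exact ⟨hg, (hXiff o.2 hv n).mp hx⟩
      · rintro ⟨hg, hl⟩; exact ⟨hg, (hXiff o.2 hv n).mpr hl⟩
    rw [cpr, h1, hfact n G hGmeas, hXL n]
    have h4 := hLowpos n hpos
    rw [mul_div_assoc, div_self h4, mul_one]
  · -- (PNFI) → (PEI)
    intro hPNFI F n hpos
    set w : (Fin (M + 1) → Bool) → (Fin (M + 1) → Bool) :=
      fun v k => if (k : ℕ) < (n : ℕ) then false else v k with hw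
    set G : Set (γ × (Fin (M + 1) → Bool)) :=
      {o | (o.1, w o.2) ∈ F ∧ (n : ℕ) ≤ X (w o.2)} with hGdef
    have hweq : ∀ v v' : Fin (M + 1) → Bool,
        (∀ k : Fin (M + 1), n ≤ k → v k = v' k) → w v = w v' := by
      intro v v' h
      funext k
      rw [hw]
      dsimp only
      by_cases hk : (k : ℕ) < (n : ℕ)
      · rw [if_pos hk, if_pos hk]
      · rw [if_neg hk, if_neg hk]
        exact h k (not_lt.mp hk)
    have hGmeas : ∀ (u : γ) (v v' : Fin (M + 1) → Bool),
        (∀ k : Fin (M + 1), n ≤ k → v k = v' k) → ((u, v) ∈ G ↔ (u, v') ∈ G) := by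
      intro u v v' h
      rw [hGdef]
      simp only [Set.mem_setOf_eq]
      rw [hweq v v' h]
    have hwfix : ∀ v : Fin (M + 1) → Bool,
        (∀ k : Fin (M + 1), (k : ℕ) < (n : ℕ) → v k = false) → w v = v := by
      intro v h
      funext k
      rw [hw]
      dsimp only
      by_cases hk : (k : ℕ) < (n : ℕ)
      · rw [if_pos hk, h k hk]
      · rw [if_neg hk]
    have hGF : ∀ o : γ × (Fin (M + 1) → Bool), o.2 (Fin.last M) = true →
        (o ∈ G ∩ {o' : γ × (Fin (M + 1) → Bool) |
            ∀ k : Fin (M + 1), (k : ℕ) < (n : ℕ) → o'.2 k = false}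
          ↔ o ∈ F ∩ {o' : γ × (Fin (M + 1) → Bool) | (n : ℕ) ≤ X o'.2}) := by
      intro o hv
      constructor
      · rintro ⟨hg, hLow⟩
        have hwv := hwfix o.2 hLow
        rw [hGdef] at hg
        simp only [Set.mem_setOf_eq] at hg
        rw [hwv] at hg
        exact ⟨hg.1, hg.2⟩
      · rintro ⟨hf, hXge⟩
        have hLow : ∀ k : Fin (M + 1), (k : ℕ) < (n : ℕ) → o.2 k = false :=
          (hXiff o.2 hv n).mp hXge
        have hwv := hwfix o.2 hLow
        refine ⟨?_, hLow⟩
        rw [hGdef]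
        simp only [Set.mem_setOf_eq]
        rw [hwv]
        exact ⟨hf, hXge⟩
    have step1 : pr P0 (G ∩ {o : γ × (Fin (M + 1) → Bool) |
          ∀ k : Fin (M + 1), (k : ℕ) < (n : ℕ) → o.2 k = false})
        = pr P0 (F ∩ {o : γ × (Fin (M + 1) → Bool) | (n : ℕ) ≤ X o.2}) :=
      SSB.pr_congr fun o hne => hGF o (hlastT o hne)
    have h4 := hLowpos n hpos
    have hprG : pr P0 G = pr P0 (F ∩ {o : γ × (Fin (M + 1) → Bool) | (n : ℕ) ≤ X o.2})
        / pr P0 {o : γ × (Fin (M + 1) → Bool) | (n : ℕ) ≤ X o.2} := by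
      rw [hXL n, ← step1, hfact n G hGmeas]
      rw [mul_div_assoc, div_self h4, mul_one]
    have hNnullPA : pr PA {ω : (γ × (Fin (M + 1) → Bool)) × Option (Fin (M + 1)) |
        ω.1 ∈ {o : γ × (Fin (M + 1) → Bool) | o.2 (Fin.last M) = false}} = 0 :=
      hPN1 _ hNnull
    have hstepA : pr PA ({ω : (γ × (Fin (M + 1) → Bool)) × Option (Fin (M + 1)) | ω.1 ∈ F}
          ∩ {ω | ω.2 = some n})
        = pr PA ({ω : (γ × (Fin (M + 1) → Bool)) × Option (Fin (M + 1)) | ω.1 ∈ G}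
          ∩ {ω | ω.2 = some n}) := by
      have hD : pr PA ({ω : (γ × (Fin (M + 1) → Bool)) × Option (Fin (M + 1)) |
          ω.1 ∈ {o : γ × (Fin (M + 1) → Bool) | o.2 (Fin.last M) = false}}
          ∪ {ω : (γ × (Fin (M + 1) → Bool)) × Option (Fin (M + 1)) |
            ∃ x : Fin (M + 1), ω.2 = some x ∧ x ∈ 𝒳 ω.1}ᶜ) = 0 := by
        have hle := SSB.pr_union_le hPA0
          ({ω : (γ × (Fin (M + 1) → Bool)) × Option (Fin (M + 1)) |
            ω.1 ∈ {o : γ × (Fin (M + 1) → Bool) | o.2 (Fin.last M) = false}})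
          ({ω : (γ × (Fin (M + 1) → Bool)) × Option (Fin (M + 1)) |
            ∃ x : Fin (M + 1), ω.2 = some x ∧ x ∈ 𝒳 ω.1}ᶜ)
        rw [hNnullPA, hB2] at hle
        have hge := SSB.pr_nonneg hPA0 ({ω : (γ × (Fin (M + 1) → Bool)) × Option (Fin (M + 1)) |
          ω.1 ∈ {o : γ × (Fin (M + 1) → Bool) | o.2 (Fin.last M) = false}}
          ∪ {ω : (γ × (Fin (M + 1) → Bool)) × Option (Fin (M + 1)) |
            ∃ x : Fin (M + 1), ω.2 = some x ∧ x ∈ 𝒳 ω.1}ᶜ)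
        linarith
      refine SSB.pr_congr_null hPA0 hD fun ω hωD => ?_
      rw [Set.mem_union] at hωD
      push_neg at hωD
      obtain ⟨hωN, hωB⟩ := hωD
      by_cases hE : ω.2 = some n
      · have hb1 : ω.1.2 (Fin.last M) = true := by
          rcases Bool.eq_false_or_eq_true (ω.1.2 (Fin.last M)) with h | h
          · exact h
          · exact (hωN h).elim
        have hb2 : (n : ℕ) ≤ X ω.1.2 := hEX n ω hE hωB
        have hiff := hGF ω.1 hb1
        have hLow : ∀ k : Fin (M + 1), (k : ℕ) < (n : ℕ) → ω.1.2 k = false :=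
          (hXiff ω.1.2 hb1 n).mp hb2
        constructor
        · rintro ⟨hf, hE'⟩
          exact ⟨(hiff.mpr ⟨hf, hb2⟩).1, hE'⟩
        · rintro ⟨hg, hE'⟩
          exact ⟨(hiff.mp ⟨hg, hLow⟩).1, hE'⟩
      · constructor
        · rintro ⟨_, hE'⟩; exact absurd hE' hE
        · rintro ⟨_, hE'⟩; exact absurd hE' hE
    calc cpr PA {ω : (γ × (Fin (M + 1) → Bool)) × Option (Fin (M + 1)) | ω.1 ∈ F}
          {ω | ω.2 = some n}
        = cpr PA {ω : (γ × (Fin (M + 1) → Bool)) × Option (Fin (M + 1)) | ω.1 ∈ G}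
          {ω | ω.2 = some n} := by rw [cpr, cpr, hstepA]
      _ = pr P0 G := hPNFI n G hGmeas hpos
      _ = cpr P0 F {o : γ × (Fin (M + 1) → Bool) | (n : ℕ) ≤ X o.2} := by
          rw [hprG, cpr]
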